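/- arXiv:2307.01478 — 8 statements merged into one kernel-verified Lean document; each statement's English description precedes it below -/
import Mathlib

section
/- If p and q are distinct prime numbers, then p²/q is not the cube of a rational number. -/
theorem prime_sq_div_prime_not_cube (p q : ℕ) (hp : p.Prime) (hq : q.Prime)
    (hpq : p ≠ q) : ¬∃ r : ℚ, (p : ℚ) ^ 2 / (q : ℚ) = r ^ 3 := by
  haveI : Fact q.Prime := ⟨hq⟩
  rintro ⟨r, hr⟩
  have hp0 : (p : ℚ) ≠ 0 := Nat.cast_ne_zero.mpr hp.ne_zero
  have hq0 : (q : ℚ) ≠ 0 := Nat.cast_ne_zero.mpr hq.ne_zero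
  have hr0 : r ≠ 0 := by
    intro h
    rw [h] at hr
    simp at hr
    rcases hr with h|h
    · exact hp.ne_zero h
    · exact hq.ne_zero h
  have hval := congrArg (padicValRat q) hr
  rw [padicValRat.div (pow_ne_zero _ hp0) hq0, padicValRat.pow (p : ℚ),
    padicValRat.pow r, padicValRat.self hq.one_lt] at hval
  have hvp : padicValRat q p = 0 := by
    rw [padicValRat.of_nat, padicValNat.eq_zero_of_not_dvd]
    · simp
    · intro hdvd
      exact hpq ((Nat.prime_dvd_prime_iff_eq hq hp).mp hdvd).symm
  rw [hvp] at hval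
  omega
end

section
/- The quotient of ℚ* by the equivalence relation ≈ (where a ≈ b iff a/b or a²/b is a rational cube) is infinite. -/
private def wv (a : ℚˣ) : {p : ℕ // p.Prime} → ZMod 3 :=
  fun p => ((padicValRat p.1 (a : ℚ) : ℤ) : ZMod 3)

private def S (s t : {p : ℕ // p.Prime} → ZMod 3) : Prop :=
  t = s ∨ t = fun p => 2 * s p

private lemma S_equiv : Equivalence S := by
  constructor
  · intro s; left; rfl
  · intro s t h
    rcases h with h | h
    · left; exact h.symm
    · right; subst h; funext p
      rw [show (2:ZMod 3) * (2 * s p) = 4 * s p by ring,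
        show (4 : ZMod 3) = 1 by decide, one_mul]
  · intro s t u h1 h2
    rcases h1 with h1 | h1 <;> rcases h2 with h2 | h2 <;> subst h1 <;> subst h2
    · left; rfl
    · right; rfl
    · right; rfl
    · left; funext p
      rw [show (2:ZMod 3) * (2 * s p) = 4 * s p by ring,
        show (4 : ZMod 3) = 1 by decide, one_mul]

private lemma wv_cube (k : ℚˣ) : wv (k ^ 3) = 0 := by
  funext p
  haveI : Fact p.1.Prime := ⟨p.2⟩
  simp only [wv, Units.val_pow_eq_pow_val]
  rw [padicValRat.pow (k : ℚ)]
  push_cast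
  rw [Pi.zero_apply, show (3 : ZMod 3) = 0 by decide, zero_mul]

private lemma wv_key {a b : ℚˣ}
    (h : (∃ k : ℚˣ, a / b = k ^ 3) ∨ (∃ k : ℚˣ, a ^ 2 / b = k ^ 3)) :
    S (wv a) (wv b) := by
  rcases h with ⟨k, hk⟩ | ⟨k, hk⟩
  · left
    funext p
    haveI : Fact p.1.Prime := ⟨p.2⟩
    have := congrArg (fun u : ℚˣ => ((padicValRat p.1 (u : ℚ) : ℤ) : ZMod 3)) hk
    rw [Units.val_div_eq_div_val,
      padicValRat.div (Units.ne_zero a) (Units.ne_zero b)] at this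
    have h2 := congrFun (wv_cube k) p
    simp only [wv, Pi.zero_apply] at h2 ⊢
    rw [h2] at this
    push_cast at this
    linear_combination -this
  · right
    funext p
    haveI : Fact p.1.Prime := ⟨p.2⟩
    have := congrArg (fun u : ℚˣ => ((padicValRat p.1 (u : ℚ) : ℤ) : ZMod 3)) hk
    rw [Units.val_div_eq_div_val,
      padicValRat.div (Units.ne_zero _) (Units.ne_zero b),
      Units.val_pow_eq_pow_val, padicValRat.pow (a : ℚ)] at this
    have h2 := congrFun (wv_cube k) p
    simp only [wv, Pi.zero_apply] at h2 ⊢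
    rw [h2] at this
    push_cast at this
    linear_combination -this

theorem rat_units_quot_approx_infinite :
    Infinite (Quot (fun a b : ℚˣ =>
      (∃ k : ℚˣ, a / b = k ^ 3) ∨ (∃ k : ℚˣ, a ^ 2 / b = k ^ 3))) := by
  set R := fun a b : ℚˣ =>
      (∃ k : ℚˣ, a / b = k ^ 3) ∨ (∃ k : ℚˣ, a ^ 2 / b = k ^ 3) with hR
  let g : ℕ → ℚˣ := fun n =>
    Units.mk0 ((Nat.nth Nat.Prime n : ℚ)) (by
      exact_mod_cast (Nat.prime_nth_prime n).ne_zero)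
  have hGF : ∀ a b : ℚˣ, R a b → Quot.mk S (wv a) = Quot.mk S (wv b) :=
    fun a b h => Quot.sound (wv_key h)
  let G : Quot R → Quot S := Quot.lift (fun a => Quot.mk S (wv a)) hGF
  apply Infinite.of_injective (fun n => Quot.mk R (g n))
  intro i j hij
  by_contra hne
  have hS := congrArg G hij
  simp only [G, Quot.lift_mk] at hS
  rw [Quot.eq, S_equiv.eqvGen_iff] at hS
  have hpi : (Nat.nth Nat.Prime i).Prime := Nat.prime_nth_prime i
  haveI : Fact (Nat.nth Nat.Prime i).Prime := ⟨hpi⟩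
  set pI : {p : ℕ // p.Prime} := ⟨Nat.nth Nat.Prime i, hpi⟩
  have hvi : wv (g i) pI = 1 := by
    simp only [wv, g, Units.val_mk0, pI]
    rw [padicValRat.self hpi.one_lt]
    norm_num
  have hvj : wv (g j) pI = 0 := by
    simp only [wv, g, Units.val_mk0, pI]
    rw [show ((Nat.nth Nat.Prime j : ℚ)) = ((Nat.nth Nat.Prime j : ℕ) : ℚ) by norm_num,
      padicValRat.of_nat]
    rw [padicValNat.eq_zero_of_not_dvd]
    · norm_num
    · intro hdvd
      exact hne (Nat.nth_injective Nat.infinite_setOf_prime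
        (((Nat.prime_dvd_prime_iff_eq hpi (Nat.prime_nth_prime j)).mp hdvd)))
  rcases hS with h | h
  · have := congrFun h pI
    rw [hvi, hvj] at this
    exact absurd this (by decide)
  · have h' := congrFun h pI
    rw [hvj, hvi] at h'
    exact absurd h' (by decide)
end

section
/- Let p, q, a, b, c, d ∈ K with p = c = 0 and suppose the system (3) of endo-commutativity equations holds for (p,q,a,b,c,d). Then a = 0. -/
theorem ecs010_empty (K : Type*) [Field K] (p q a b c d : K)
    (hp : p = 0) (hc : c = 0)
    (h1 : p*q + p*c = p*b^2 + a^2*b + a*b*c)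
    (h2 : p*(c - a) = (b - d) * (p*(b + d) - q*(a + c)))
    (h3 : p*(d - b) = a^2 - c^2)
    (h4 : q^2 + p*d = a^2 + q*b^2 + a*b^2 + a*b*d)
    (h5 : q*(d - b) = a*b - c*d) :
    a = 0 := by
  have : a^2 = 0 := by
    linear_combination (d-b)*hp + c*hc - h3
  exact pow_eq_zero_iff (n := 2) (by norm_num) |>.mp this
end

section
/- Let p, q, a, b, c, d ∈ K with a = c = 0 and p ≠ 0, and suppose the system (3) of endo-commutativity equations holds. Then q = b = d = 0. -/
theorem ecs100_form (K : Type*) [Field K] (p q a b c d : K)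
    (ha : a = 0) (hc : c = 0) (hp : p ≠ 0)
    (h1 : p*q + p*c = p*b^2 + a^2*b + a*b*c)
    (h2 : p*(c - a) = (b - d) * (p*(b + d) - q*(a + c)))
    (h3 : p*(d - b) = a^2 - c^2)
    (h4 : q^2 + p*d = a^2 + q*b^2 + a*b^2 + a*b*d)
    (h5 : q*(d - b) = a*b - c*d) :
    q = 0 ∧ b = 0 ∧ d = 0 := by
  subst ha hc
  have hq : q = b^2 := by
    have : p * (q - b^2) = 0 := by linear_combination h1
    rcases mul_eq_zero.mp this with h | h
    · exact absurd h hp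
    · exact sub_eq_zero.mp h
  have hdb : d = b := by
    have : p * (d - b) = 0 := by linear_combination h3
    rcases mul_eq_zero.mp this with h | h
    · exact absurd h hp
    · exact sub_eq_zero.mp h
  subst hdb hq
  have hb : d = 0 := by
    have : p * d = 0 := by linear_combination h4
    rcases mul_eq_zero.mp this with h | h
    · exact absurd h hp
    · exact h
  subst hb
  simp
end

section
/- Let A be the 2-dimensional algebra over K with basis {e, f} and multiplication e² = f, ef = fe = 0, f² = pe with p ≠ 0. Then A is endo-commutative: (x·x)·(y·y) = (x·y)·(x·y) for all x, y ∈ A. -/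
def smul2 {K : Type*} [Field K] (p : K) (x y : K × K) : K × K :=
  (p * x.2 * y.2, x.1 * y.1)

theorem typeI_endo_commutative (K : Type*) [Field K] (p : K) (hp : p ≠ 0)
    (x y : K × K) :
    smul2 p (smul2 p x x) (smul2 p y y) = smul2 p (smul2 p x y) (smul2 p x y) := by
  simp only [smul2, Prod.mk.injEq]; constructor <;> ring
end

section
/- Let p, p' ∈ K*. If p = p'·t³ for some t ∈ K* (i.e., p ∼ p'), then there exist x, y, z, w ∈ K with xw − yz ≠ 0 satisfying the system: p'y² = z, x² = w, p'w² = px, z² = py, yw = 0, xz = 0. (Hence S(p,0,0,0,0,0) ≅ S(p',0,0,0,0,0).) -/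
theorem sim_implies_transformation (K : Type*) [Field K] (p p' : K)
    (hp : p ≠ 0) (hp' : p' ≠ 0) (t : K) (ht : t ≠ 0) (h : p = p' * t ^ 3) :
    ∃ x y z w : K, x * w - y * z ≠ 0 ∧
      p' * y ^ 2 = z ∧ x ^ 2 = w ∧ p' * w ^ 2 = p * x ∧
      z ^ 2 = p * y ∧ y * w = 0 ∧ x * z = 0 := by
  refine ⟨t, 0, 0, t ^ 2, ?_, by ring, by ring, by rw [h]; ring, by ring, by ring, by ring⟩
  simpa using pow_ne_zero 3 ht
end

section
/- Let p, p' ∈ K*. If p² = p'·t³ for some t ∈ K* (i.e., p² ∼ p'), then there exist x, y, z, w ∈ K with xw − yz ≠ 0 satisfying: p'y² = z, x² = w, p'w² = px, z² = py, yw = 0, xz = 0. -/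
theorem sq_sim_implies_transformation (K : Type*) [Field K] (p p' : K)
    (hp : p ≠ 0) (hp' : p' ≠ 0) (t : K) (ht : t ≠ 0) (h : p ^ 2 = p' * t ^ 3) :
    ∃ x y z w : K, x * w - y * z ≠ 0 ∧
      p' * y ^ 2 = z ∧ x ^ 2 = w ∧ p' * w ^ 2 = p * x ∧
      z ^ 2 = p * y ∧ y * w = 0 ∧ x * z = 0 := by
  refine ⟨0, p / (p' * t), p' * (p / (p' * t)) ^ 2, 0, ?_, rfl, by ring, by ring, ?_, by ring, by ring⟩
  · have : p / (p' * t) ≠ 0 := div_ne_zero hp (mul_ne_zero hp' ht)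
    simp [this, hp']
  · field_simp
    ring_nf
    exact h
end

section
/- Let p, p' ∈ K* and suppose x, y, z, w ∈ K with xw − yz ≠ 0 satisfy: p'y² = z, x² = w, p'w² = px, z² = py, yw = 0, xz = 0. Then either p/p' is a cube in K* or p²/p' is a cube in K* (i.e., p ≈ p'). -/
theorem transformation_implies_approx (K : Type*) [Field K] (p p' : K)
    (hp : p ≠ 0) (hp' : p' ≠ 0) (x y z w : K)
    (hdet : x * w - y * z ≠ 0)
    (h1 : p' * y ^ 2 = z) (h2 : x ^ 2 = w) (h3 : p' * w ^ 2 = p * x)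
    (h4 : z ^ 2 = p * y) (h5 : y * w = 0) (h6 : x * z = 0) :
    (∃ k : K, k ≠ 0 ∧ p / p' = k ^ 3) ∨ (∃ k : K, k ≠ 0 ∧ p ^ 2 / p' = k ^ 3) := by
  rcases mul_eq_zero.mp h6 with hx | hz
  · -- x = 0, so w = 0, y z ≠ 0
    subst hx
    have hw : w = 0 := by rw [← h2]; ring
    subst hw
    have hy : y ≠ 0 := fun h => hdet (by rw [h]; ring)
    right
    refine ⟨p' * y ^ 2, mul_ne_zero hp' (pow_ne_zero _ hy), ?_⟩
    have hpval : p = p' ^ 2 * y ^ 3 := by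
      have h : (p' * y ^ 2) ^ 2 = p * y := by rw [h1, h4]
      have := mul_right_cancel₀ hy (show (p' ^ 2 * y ^ 3) * y = p * y by linear_combination h)
      linear_combination -this
    rw [hpval]; field_simp
  · -- z = 0
    have hy : y = 0 := by
      have : p * y = 0 := by rw [← h4, hz]; ring
      rcases mul_eq_zero.mp this with h | h
      · exact absurd h hp
      · exact h
    subst hy; subst hz
    have hx : x ≠ 0 := fun h => hdet (by rw [h]; ring)
    left
    refine ⟨x, hx, ?_⟩
    have hpval : p = p' * x ^ 3 := by
      have h := h3
      rw [← h2] at h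
      have := mul_right_cancel₀ hx (show (p' * x ^ 3) * x = p * x by linear_combination h)
      linear_combination -this
    rw [hpval]; field_simp
end
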